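/- Assume additionally that w is continuously differentiable. Then the set D₀ := { f : [0,∞) → H : f is twice continuously (Fréchet) differentiable and f' is continuously differentiable with compact support } is contained in H_w and is dense in H_w with respect to the norm ‖·‖_w. -/

import Mathlib

open MeasureTheory Filter Set
open scoped ENNReal NNReal Topology

/-- `f' : ℝ → H` is a weak derivative of `f : ℝ → H` on `[0,∞)`: it is locally Bochner
integrable and the fundamental theorem of calculus `f(x) = f(0) + ∫₀ˣ f'(y) dy` holds. -/
def HasWeakDeriv {H : Type*} [NormedAddCommGroup H] [NormedSpace ℝ H]
    (f f' : ℝ → H) : Prop :=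
  (∀ x : ℝ, 0 ≤ x → IntegrableOn f' (Icc 0 x)) ∧
    ∀ x : ℝ, 0 ≤ x → f x = f 0 + ∫ y in Ioc (0 : ℝ) x, f' y

/-- The squared norm `‖f‖²_w = |f(0)|²_H + ∫₀^∞ w(x) |f'(x)|²_H dx` of an element of the
`H`-valued Filipovic space, recorded through the value `a = f(0)` and the weak derivative `f'`
(extended-real valued, so membership in `H_w` means this quantity is finite). -/
noncomputable def wNormSq {H : Type*} [NormedAddCommGroup H] (w : ℝ → ℝ) (a : H)
    (f' : ℝ → H) : ℝ≥0∞ :=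
  (‖a‖₊ : ℝ≥0∞) ^ 2 + ∫⁻ x in Ioi (0 : ℝ), ENNReal.ofReal (w x) * (‖f' x‖₊ : ℝ≥0∞) ^ 2

open scoped Convolution Pointwise

lemma sq_eLpNorm_two {α : Type*} [MeasurableSpace α] {H : Type*} [NormedAddCommGroup H]
    (μ : Measure α) (u : α → H) :
    eLpNorm u 2 μ ^ 2 = ∫⁻ x, (‖u x‖₊ : ℝ≥0∞) ^ 2 ∂μ := by
  rw [eLpNorm_eq_lintegral_rpow_enorm_toReal two_ne_zero ENNReal.ofNat_ne_top]
  have h2 : ((2 : ℝ≥0∞)).toReal = (2 : ℝ) := by simp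
  rw [h2]
  rw [← ENNReal.rpow_natCast _ 2, ← ENNReal.rpow_mul]
  have hx : ∀ x : α, ‖u x‖ₑ ^ (2 : ℝ) = (‖u x‖₊ : ℝ≥0∞) ^ (2 : ℕ) := fun x => by
    rw [← ENNReal.rpow_natCast]; norm_num; rfl
  simp only [hx]
  norm_num

/-- If `w` is in addition continuously differentiable, then the set
`D₀ = {f : twice continuously differentiable with `f'` continuously differentiable of compact
support}` is contained in `H_w` and is dense in `H_w` for the norm `‖·‖_w`. -/
theorem stmt_9 {H : Type*} [NormedAddCommGroup H] [InnerProductSpace ℝ H] [CompleteSpace H]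
    [SecondCountableTopology H]
    (w : ℝ → ℝ) (hwmono : MonotoneOn w (Ici 0)) (hw0 : w 0 = 1)
    (hw1 : ∀ x : ℝ, 0 ≤ x → 1 ≤ w x)
    (hwC1 : ContDiffOn ℝ 1 w (Ici 0)) :
    (∀ g : ℝ → H, ContDiff ℝ 2 g → HasCompactSupport (deriv g) →
        HasWeakDeriv g (deriv g) ∧ wNormSq w (g 0) (deriv g) < ⊤)
      ∧ ∀ f f' : ℝ → H, HasWeakDeriv f f' → wNormSq w (f 0) f' < ⊤ →
          ∀ ε : ℝ, 0 < ε → ∃ g : ℝ → H, ContDiff ℝ 2 g ∧ HasCompactSupport (deriv g) ∧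
            wNormSq w (f 0 - g 0) (fun x => f' x - deriv g x) < ENNReal.ofReal (ε ^ 2) := by
  classical
  set ν : Measure ℝ := (volume.restrict (Ioi 0)).withDensity (fun x => ENNReal.ofReal (w x))
    with hν
  have hwcont : ContinuousOn w (Ici 0) := hwC1.continuousOn
  have hwae : AEMeasurable (fun x => ENNReal.ofReal (w x)) (volume.restrict (Ioi 0)) := by
    refine ENNReal.measurable_ofReal.comp_aemeasurable ?_
    exact ((hwcont.mono (Ioi_subset_Ici le_rfl))).aemeasurable measurableSet_Ioi
  -- ν of compact sets is finite
  have hνK : ∀ K : Set ℝ, IsCompact K → ν K < ⊤ := by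
    intro K hK
    obtain ⟨R, hR⟩ := hK.isBounded.subset_closedBall 0
    set R' : ℝ := max R 0 with hR'
    have hsub : K ⊆ Metric.closedBall 0 R' :=
      hR.trans (Metric.closedBall_subset_closedBall (le_max_left _ _))
    have hmeas : MeasurableSet (Metric.closedBall (0 : ℝ) R') := measurableSet_closedBall
    have hle : ν K ≤ ν (Metric.closedBall 0 R') := measure_mono hsub
    refine hle.trans_lt ?_
    rw [hν, withDensity_apply _ hmeas, Measure.restrict_restrict hmeas]
    have hbound : ∀ x ∈ Metric.closedBall (0:ℝ) R' ∩ Ioi 0,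
        ENNReal.ofReal (w x) ≤ ENNReal.ofReal (w R') := by
      intro x hx
      rcases hx with ⟨hx1, hx2⟩
      have hx0 : (0:ℝ) < x := hx2
      have hxR : x ≤ R' := by
        have := hx1
        rw [Metric.mem_closedBall, Real.dist_eq, sub_zero] at this
        exact (le_abs_self x).trans this
      exact ENNReal.ofReal_le_ofReal (hwmono hx0.le (by rw [mem_Ici, hR']; exact le_max_right _ _) hxR)
    calc ∫⁻ x in Metric.closedBall (0:ℝ) R' ∩ Ioi 0, ENNReal.ofReal (w x)
        ≤ ∫⁻ _x in Metric.closedBall (0:ℝ) R' ∩ Ioi 0, ENNReal.ofReal (w R') :=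
          setLIntegral_mono' (hmeas.inter measurableSet_Ioi) hbound
      _ = ENNReal.ofReal (w R') * volume (Metric.closedBall (0:ℝ) R' ∩ Ioi 0) := by
          rw [setLIntegral_const]
      _ < ⊤ := by
          refine ENNReal.mul_lt_top ENNReal.ofReal_lt_top ?_
          exact ((measure_mono inter_subset_left).trans_lt
            (isCompact_closedBall _ _).measure_lt_top)
  have hfinK : IsFiniteMeasureOnCompacts ν := ⟨fun {K} hK => hνK K hK⟩
  haveI := hfinK
  haveI : ν.Regular := by infer_instance
  -- conversion between the weighted lintegral and eLpNorm squared
  have key : ∀ u : ℝ → H, AEStronglyMeasurable u ν →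
      (∫⁻ x in Ioi (0:ℝ), ENNReal.ofReal (w x) * (‖u x‖₊ : ℝ≥0∞) ^ 2)
        = eLpNorm u 2 ν ^ 2 := by
    intro u hu
    rw [sq_eLpNorm_two, hν,
      lintegral_withDensity_eq_lintegral_mul₀' hwae (show AEMeasurable (fun x => (‖u x‖₊ : ℝ≥0∞) ^ 2) ν from (hu.enorm).pow_const 2)]
    rfl

  -- Part 1
  have part1 : ∀ g : ℝ → H, ContDiff ℝ 2 g → HasCompactSupport (deriv g) →
      HasWeakDeriv g (deriv g) ∧ wNormSq w (g 0) (deriv g) < ⊤ := by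
    intro g hg hsupp
    have h2 : ContDiff ℝ ((1 : ℕ) + 1) g := by exact_mod_cast hg
    have hgd : Differentiable ℝ g := (contDiff_succ_iff_deriv.mp h2).1
    have hd1 : ContDiff ℝ 1 (deriv g) := by exact_mod_cast (contDiff_succ_iff_deriv.mp h2).2.2
    have hdc : Continuous (deriv g) := hd1.continuous
    constructor
    · constructor
      · intro x hx
        exact hdc.integrableOn_Icc
      · intro x hx
        have h1 : ∫ y in Ioc (0:ℝ) x, deriv g y = ∫ y in (0:ℝ)..x, deriv g y :=
          (intervalIntegral.integral_of_le hx).symm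
        rw [h1, intervalIntegral.integral_deriv_eq_sub (fun y _ => hgd y)
          (hdc.intervalIntegrable _ _)]
        abel
    · obtain ⟨R, hR0, hRsupp⟩ : ∃ R : ℝ, 0 ≤ R ∧ ∀ x, R < x → deriv g x = 0 := by
        obtain ⟨R, hR⟩ := hsupp.isBounded.subset_closedBall 0
        refine ⟨max R 0, le_max_right _ _, fun x hx => ?_⟩
        by_contra h
        have hmem : x ∈ tsupport (deriv g) :=
          subset_tsupport _ (by simpa [Function.mem_support] using h)
        have hball := hR hmem
        rw [Metric.mem_closedBall, Real.dist_eq, sub_zero] at hball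
        have := (le_abs_self x).trans hball
        have := le_max_left R (0:ℝ)
        linarith
      obtain ⟨C, hC⟩ : ∃ C : ℝ≥0, ∀ x, (‖deriv g x‖₊ : ℝ≥0∞) ≤ (C : ℝ≥0∞) := by
        obtain ⟨C, hC⟩ := hdc.bounded_above_of_compact_support hsupp
        refine ⟨C.toNNReal, fun x => ?_⟩
        rw [ENNReal.coe_le_coe]
        have := hC x
        simp only [← NNReal.coe_le_coe, coe_nnnorm]
        exact this.trans (le_max_left _ _)
      rw [wNormSq]
      refine ENNReal.add_lt_top.mpr ⟨ENNReal.pow_lt_top ENNReal.coe_lt_top, ?_⟩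
      have hb : ∀ x ∈ Ioi (0:ℝ), ENNReal.ofReal (w x) * (‖deriv g x‖₊ : ℝ≥0∞) ^ 2
          ≤ (Ioc (0:ℝ) R).indicator (fun _ => ENNReal.ofReal (w R) * (C : ℝ≥0∞) ^ 2) x := by
        intro x hx
        have hx0 : (0:ℝ) < x := hx
        by_cases hxR : x ≤ R
        · rw [indicator_of_mem (Set.mem_Ioc.mpr ⟨hx0, hxR⟩)]
          exact mul_le_mul' (ENNReal.ofReal_le_ofReal (hwmono hx0.le hR0 hxR))
            (pow_le_pow_left' (hC x) 2)
        · rw [hRsupp x (not_le.mp hxR)]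
          simp
      calc ∫⁻ x in Ioi (0:ℝ), ENNReal.ofReal (w x) * (‖deriv g x‖₊ : ℝ≥0∞) ^ 2
          ≤ ∫⁻ x in Ioi (0:ℝ),
            (Ioc (0:ℝ) R).indicator (fun _ => ENNReal.ofReal (w R) * (C : ℝ≥0∞) ^ 2) x :=
            setLIntegral_mono' measurableSet_Ioi hb
        _ = ENNReal.ofReal (w R) * (C : ℝ≥0∞) ^ 2 * (volume.restrict (Ioi 0)) (Ioc (0:ℝ) R) := by
            rw [lintegral_indicator measurableSet_Ioc, setLIntegral_const]
        _ < ⊤ := by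
            refine ENNReal.mul_lt_top (ENNReal.mul_lt_top ENNReal.ofReal_lt_top
              (ENNReal.pow_lt_top ENNReal.coe_lt_top)) ?_
            refine (Measure.restrict_apply_le _ _).trans_lt ?_
            simp [Real.volume_Ioc]

  -- Part 2
  have part2 : ∀ f f' : ℝ → H, HasWeakDeriv f f' → wNormSq w (f 0) f' < ⊤ →
      ∀ ε : ℝ, 0 < ε → ∃ g : ℝ → H, ContDiff ℝ 2 g ∧ HasCompactSupport (deriv g) ∧
        wNormSq w (f 0 - g 0) (fun x => f' x - deriv g x) < ENNReal.ofReal (ε ^ 2) := by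
    intro f f' hwd hfin ε hε
    have hI : (∫⁻ x in Ioi (0:ℝ), ENNReal.ofReal (w x) * (‖f' x‖₊ : ℝ≥0∞) ^ 2) < ⊤ :=
      (le_add_self).trans_lt hfin
    -- measurability of f' on (0, ∞)
    have hmeas0 : AEStronglyMeasurable f' (volume.restrict (Ioi 0)) := by
      have h1 : ∀ n : ℕ, AEStronglyMeasurable f' (volume.restrict (Icc (0:ℝ) n)) :=
        fun n => (hwd.1 n (Nat.cast_nonneg n)).aestronglyMeasurable
      have h2 : Ioi (0:ℝ) ⊆ ⋃ n : ℕ, Icc (0:ℝ) n := by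
        intro x hx
        obtain ⟨n, hn⟩ := exists_nat_ge x
        exact mem_iUnion.mpr ⟨n, ⟨le_of_lt hx, hn⟩⟩
      exact (aestronglyMeasurable_iUnion_iff.mpr h1).mono_measure
        (Measure.restrict_mono h2 le_rfl)
    have hmeasν : AEStronglyMeasurable f' ν :=
      hmeas0.mono_ac (withDensity_absolutelyContinuous _ _)
    have hmem : MemLp f' 2 ν := by
      refine ⟨hmeasν, ?_⟩
      have hk := key f' hmeasν
      rw [hk] at hI
      by_contra h
      rw [not_lt, top_le_iff] at h
      rw [h] at hI
      simp [ENNReal.top_pow] at hI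
    -- continuous compactly supported approximation
    set δ : ℝ≥0∞ := ENNReal.ofReal (ε / 4) with hδdef
    have hδ0 : δ ≠ 0 := by
      simp only [hδdef, ne_eq, ENNReal.ofReal_eq_zero, not_le]
      linarith
    obtain ⟨g₁, hg₁supp, hg₁close, hg₁cont, hg₁mem⟩ :=
      hmem.exists_hasCompactSupport_eLpNorm_sub_le ENNReal.ofNat_ne_top hδ0
    -- the compact set harboring all supports
    obtain ⟨R₁, hR₁⟩ := hg₁supp.isBounded.subset_closedBall 0
    set K : Set ℝ := Metric.closedBall 0 (|R₁| + 1) with hKdef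
    have hg₁K : tsupport g₁ ⊆ K :=
      hR₁.trans (Metric.closedBall_subset_closedBall (by
        have := le_abs_self R₁; linarith))
    have hKfin : ν K < ⊤ := hνK _ (isCompact_closedBall _ _)
    -- choice of the uniform closeness parameter η
    set D : ℝ≥0∞ := ν K ^ (1 / (2:ℝ)) + 1 with hDdef
    have hD0 : D ≠ 0 := by simp [hDdef]
    have hDtop : D ≠ ⊤ := by
      simp only [hDdef, ne_eq, ENNReal.add_eq_top, ENNReal.one_ne_top, or_false]
      exact (ENNReal.rpow_lt_top_of_nonneg (by norm_num) hKfin.ne).ne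
    set c : ℝ≥0∞ := δ / D with hcdef
    have hc0 : c ≠ 0 := by
      simp only [hcdef, ne_eq, ENNReal.div_eq_zero_iff, not_or]
      exact ⟨hδ0, hDtop⟩
    have hctop : c ≠ ⊤ := by
      simp only [hcdef, ne_eq, ENNReal.div_eq_top, not_or, not_and_or]
      exact ⟨Or.inr hD0, Or.inl (by simp [hδdef])⟩
    set η : ℝ := c.toReal with hηdef
    have hη0 : 0 < η := ENNReal.toReal_pos hc0 hctop
    have hηc : ENNReal.ofReal η = c := ENNReal.ofReal_toReal hctop
    -- uniform continuity of g₁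
    have hg₁uc : UniformContinuous g₁ :=
      hg₁cont.uniformContinuous_of_tendsto_cocompact hg₁supp.is_zero_at_infty
    obtain ⟨d, hd0, hd⟩ := Metric.uniformContinuous_iff.mp hg₁uc η hη0
    set r : ℝ := min d 1 with hrdef
    have hr0 : 0 < r := lt_min hd0 one_pos
    have hr1 : r ≤ 1 := min_le_right _ _
    have hrd : r ≤ d := min_le_left _ _
    set φ : ContDiffBump (0:ℝ) := ⟨r/2, r, by positivity, by linarith⟩ with hφdef
    set h : ℝ → H := (φ.normed volume) ⋆[ContinuousLinearMap.lsmul ℝ ℝ, volume] g₁ with hhdef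
    have hhsm : ContDiff ℝ 2 h := by
      have := φ.hasCompactSupport_normed.contDiff_convolution_left
        (ContinuousLinearMap.lsmul ℝ ℝ) (φ.contDiff_normed (n := ⊤) (μ := volume))
        (hg₁cont.locallyIntegrable : LocallyIntegrable g₁ volume)
      exact this.of_le (by norm_cast)
    have hhsupp : HasCompactSupport h :=
      HasCompactSupport.convolution (L := ContinuousLinearMap.lsmul ℝ ℝ) (μ := volume)
        φ.hasCompactSupport_normed hg₁supp
    have hclose : ∀ x : ℝ, dist (h x) (g₁ x) ≤ η := by
      intro x
      refine φ.dist_normed_convolution_le hg₁cont.aestronglyMeasurable ?_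
      intro y hy
      refine le_of_lt (hd ?_)
      have : dist y x < r := by simpa [Metric.mem_ball] using hy
      exact this.trans_le hrd
    -- support of h inside K
    have hhK : Function.support h ⊆ K := by
      have h1 : Function.support h ⊆ Function.support (φ.normed volume) + Function.support g₁ :=
        support_convolution_subset _
      refine h1.trans ?_
      intro x hx
      obtain ⟨a, ha, b, hb, rfl⟩ := hx
      have ha' : |a| < r := by
        rw [φ.support_normed_eq] at ha
        simpa [Metric.mem_ball, Real.dist_eq] using ha
      have hb'' : |b| ≤ R₁ := by
        have := hR₁ (subset_tsupport _ hb)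
        simpa [Metric.mem_closedBall, Real.dist_eq] using this
      simp only [hKdef, Metric.mem_closedBall, Real.dist_eq, sub_zero]
      calc |a + b| ≤ |a| + |b| := abs_add_le _ _
        _ ≤ 1 + |R₁| := add_le_add (ha'.le.trans hr1) (hb''.trans (le_abs_self _))
        _ = |R₁| + 1 := by ring
    -- the L² bound on g₁ - h
    have hg₁h : eLpNorm (fun x => g₁ x - h x) 2 ν ≤ δ := by
      have hb : ∀ x : ℝ, ‖g₁ x - h x‖ ≤ ‖K.indicator (fun _ => η) x‖ := by
        intro x
        by_cases hx : x ∈ K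
        · rw [indicator_of_mem hx]
          rw [← dist_eq_norm, Real.norm_eq_abs, abs_of_pos hη0, dist_comm]
          exact hclose x
        · have hg1 : g₁ x = 0 := by
            by_contra hne
            exact hx (hg₁K (subset_tsupport _ hne))
          have hh : h x = 0 := by
            by_contra hne
            exact hx (hhK hne)
          rw [indicator_of_notMem hx, hg1, hh]
          simp
      calc eLpNorm (fun x => g₁ x - h x) 2 ν ≤ eLpNorm (K.indicator (fun _ => η)) 2 ν :=
            eLpNorm_mono hb
        _ ≤ (‖η‖₊ : ℝ≥0∞) * ν K ^ (1 / (2:ℝ≥0∞).toReal) := eLpNorm_indicator_const_le _ _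
        _ = c * ν K ^ (1 / (2:ℝ)) := by
            rw [← enorm_eq_nnnorm, Real.enorm_eq_ofReal hη0.le, hηc]
            norm_num
        _ ≤ c * D := by
            refine mul_le_mul_right ?_ _
            simp [hDdef, le_add_right]
        _ = δ := by
            rw [hcdef, ENNReal.div_mul_cancel hD0 hDtop]
    -- build the approximating function G
    set G : ℝ → H := fun x => f 0 + ∫ t in (0:ℝ)..x, h t with hGdef
    have hG : ∀ x : ℝ, HasDerivAt G (h x) x := fun x =>
      ((hhsm.continuous.integral_hasStrictDerivAt 0 x).hasDerivAt).const_add (f 0)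
    have hGd : deriv G = h := funext fun x => (hG x).deriv
    have hGsm : ContDiff ℝ 2 G := by
      have h2 : (2 : WithTop ℕ∞) = (1:ℕ∞) + 1 := by norm_cast
      rw [h2, contDiff_succ_iff_deriv]
      refine ⟨fun x => (hG x).differentiableAt, ?_, ?_⟩
      · intro hω; exact absurd hω (by norm_num)
      · rw [hGd]; exact hhsm.of_le (by norm_cast)
    have hG0 : G 0 = f 0 := by simp [hGdef]
    refine ⟨G, hGsm, by rw [hGd]; exact hhsupp, ?_⟩
    -- final estimate
    have hsubm : AEStronglyMeasurable (fun x => f' x - h x) ν :=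
      hmeasν.sub hhsm.continuous.aestronglyMeasurable
    rw [wNormSq, hGd, hG0, sub_self]
    simp only [nnnorm_zero, ENNReal.coe_zero, ne_eq, OfNat.ofNat_ne_zero,
      not_false_eq_true, zero_pow, zero_add]
    rw [key _ hsubm]
    have tri : eLpNorm (fun x => f' x - h x) 2 ν ≤ δ + δ := by
      have hsplit : (fun x => f' x - h x) = (f' - g₁) + fun x => g₁ x - h x := by
        funext x; simp [Pi.sub_apply]
      rw [hsplit]
      refine (eLpNorm_add_le (hmeasν.sub hg₁cont.aestronglyMeasurable)
        (hg₁cont.aestronglyMeasurable.sub hhsm.continuous.aestronglyMeasurable)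
        one_le_two).trans ?_
      exact add_le_add hg₁close hg₁h
    calc eLpNorm (fun x => f' x - h x) 2 ν ^ 2 ≤ (δ + δ) ^ 2 := pow_le_pow_left' tri 2
      _ = ENNReal.ofReal ((ε / 2) ^ 2) := by
          rw [hδdef, ← ENNReal.ofReal_add (by linarith) (by linarith),
            ← ENNReal.ofReal_pow (by linarith)]
          congr 1
          ring
      _ < ENNReal.ofReal (ε ^ 2) := by
          rw [ENNReal.ofReal_lt_ofReal_iff (by positivity)]
          nlinarith
  exact ⟨part1, part2⟩
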